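/- arXiv:2202.12289 — 3 statements merged into one kernel-verified Lean document; each statement's English description precedes it below -/
import Mathlib

section
/- Let B be the symmetric 4×4 integer matrix B = [[2,1,-4,-2],[1,2,-2,-4],[-4,-2,-2,-1],[-2,-4,-1,-2]] (which equals A + Aᵀ for the Seifert matrix A of the genus-2 surface of the knot J of Remark 1.6). Then the associated integral quadratic form is anisotropic: for every vector v ∈ ℤ⁴, if vᵀ B v = 0 then v = 0. -/
open Matrix

lemma key9 : ∀ a b c d : ZMod 9,
    2*a^2+2*b^2-2*c^2-2*d^2+2*a*b-8*a*c-4*a*d-4*b*c-8*b*d-2*c*d = 0 →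
    3*a = 0 ∧ 3*b = 0 ∧ 3*c = 0 ∧ 3*d = 0 := by decide

lemma descent : ∀ n : ℕ, ∀ a b c d : ℤ,
    a.natAbs + b.natAbs + c.natAbs + d.natAbs = n →
    2*a^2+2*b^2-2*c^2-2*d^2+2*a*b-8*a*c-4*a*d-4*b*c-8*b*d-2*c*d = 0 →
    a = 0 ∧ b = 0 ∧ c = 0 ∧ d = 0 := by
  intro n
  induction n using Nat.strong_induction_on with
  | _ n ih =>
    intro a b c d hn h
    have h9 : 2*(a:ZMod 9)^2+2*(b:ZMod 9)^2-2*(c:ZMod 9)^2-2*(d:ZMod 9)^2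
        +2*(a:ZMod 9)*(b:ZMod 9)-8*(a:ZMod 9)*(c:ZMod 9)-4*(a:ZMod 9)*(d:ZMod 9)
        -4*(b:ZMod 9)*(c:ZMod 9)-8*(b:ZMod 9)*(d:ZMod 9)-2*(c:ZMod 9)*(d:ZMod 9) = 0 := by
      exact_mod_cast congrArg (fun x : ℤ => (x : ZMod 9)) h
    obtain ⟨ha, hb, hc, hd⟩ := key9 _ _ _ _ h9
    have ha' : (9:ℤ) ∣ 3*a := by
      exact_mod_cast (ZMod.intCast_zmod_eq_zero_iff_dvd (3*a) 9).mp (by push_cast; exact ha)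
    have hb' : (9:ℤ) ∣ 3*b := by
      exact_mod_cast (ZMod.intCast_zmod_eq_zero_iff_dvd (3*b) 9).mp (by push_cast; exact hb)
    have hc' : (9:ℤ) ∣ 3*c := by
      exact_mod_cast (ZMod.intCast_zmod_eq_zero_iff_dvd (3*c) 9).mp (by push_cast; exact hc)
    have hd' : (9:ℤ) ∣ 3*d := by
      exact_mod_cast (ZMod.intCast_zmod_eq_zero_iff_dvd (3*d) 9).mp (by push_cast; exact hd)
    have ha3 : (3:ℤ) ∣ a := by omega
    have hb3 : (3:ℤ) ∣ b := by omega
    have hc3 : (3:ℤ) ∣ c := by omega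
    have hd3 : (3:ℤ) ∣ d := by omega
    obtain ⟨a', rfl⟩ := ha3
    obtain ⟨b', rfl⟩ := hb3
    obtain ⟨c', rfl⟩ := hc3
    obtain ⟨d', rfl⟩ := hd3
    have h' : 2*a'^2+2*b'^2-2*c'^2-2*d'^2+2*a'*b'-8*a'*c'-4*a'*d'-4*b'*c'-8*b'*d'-2*c'*d' = 0 := by
      have h9' : (9:ℤ) * (2*a'^2+2*b'^2-2*c'^2-2*d'^2+2*a'*b'-8*a'*c'-4*a'*d'-4*b'*c'-8*b'*d'-2*c'*d') = 0 := by
        linear_combination h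
      have := mul_eq_zero.mp h9'
      omega
    by_cases hz : a'.natAbs + b'.natAbs + c'.natAbs + d'.natAbs = 0
    · constructor
      · omega
      constructor
      · omega
      constructor
      · omega
      · omega
    · have hlt : a'.natAbs + b'.natAbs + c'.natAbs + d'.natAbs < n := by
        simp only [Int.natAbs_mul] at hn
        norm_num at hn
        omega
      obtain ⟨e1, e2, e3, e4⟩ := ih _ hlt a' b' c' d' rfl h'
      subst e1; subst e2; subst e3; subst e4
      norm_num

theorem stmt_0 :
    let B : Matrix (Fin 4) (Fin 4) ℤ :=
      !![2, 1, -4, -2;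
         1, 2, -2, -4;
         -4, -2, -2, -1;
         -2, -4, -1, -2]
    ∀ v : Fin 4 → ℤ, v ⬝ᵥ (B *ᵥ v) = 0 → v = 0 := by
  intro B v h
  simp only [B] at h
  simp [dotProduct, mulVec, Fin.sum_univ_four, Matrix.cons_val_zero,
    Matrix.cons_val_one, Matrix.head_cons, Matrix.cons_val_two, Matrix.tail_cons,
    Matrix.cons_val_three] at h
  have hq : 2*(v 0)^2+2*(v 1)^2-2*(v 2)^2-2*(v 3)^2+2*(v 0)*(v 1)-8*(v 0)*(v 2)
      -4*(v 0)*(v 3)-4*(v 1)*(v 2)-8*(v 1)*(v 3)-2*(v 2)*(v 3) = 0 := by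
    linear_combination h
  obtain ⟨e1, e2, e3, e4⟩ := descent _ (v 0) (v 1) (v 2) (v 3) rfl hq
  funext i
  fin_cases i <;> simpa
end

section
/- Let B be the symmetric 4×4 integer matrix B = [[2,1,-4,-2],[1,2,-2,-4],[-4,-2,-2,-1],[-2,-4,-1,-2]] (which equals A + Aᵀ for the Seifert matrix A of the genus-2 surface of the knot J of Remark 1.6). Then the quadratic form with Gram matrix B is anisotropic over the field ℚ₃ of 3-adic numbers: for every vector v ∈ (ℚ₃)⁴, if vᵀ B v = 0 then v = 0. -/
open Matrix

/-- If the residue of a 3-adic integer is nonzero, it has norm 1. -/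
lemma aux_unit_norm (z : ℤ_[3]) (hz : PadicInt.toZMod z ≠ 0) : ‖z‖ = 1 := by
  rcases lt_or_eq_of_le (PadicInt.norm_le_one z) with h | h
  · exfalso
    apply hz
    rw [← RingHom.mem_ker, PadicInt.ker_toZMod, PadicInt.maximalIdeal_eq_span_p,
      Ideal.mem_span_singleton, ← PadicInt.norm_lt_one_iff_dvd]
    exact h
  · exact h

lemma aux_small (z : ℤ_[3]) (hz : PadicInt.toZMod z = 0) : ‖z‖ < 1 := by
  rw [← RingHom.mem_ker, PadicInt.ker_toZMod, PadicInt.maximalIdeal_eq_span_p,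
      Ideal.mem_span_singleton, ← PadicInt.norm_lt_one_iff_dvd] at hz
  exact hz

lemma aux_zmod3 : ∀ a b : ZMod 3, a ^ 2 - 5 * b ^ 2 = 0 → a = 0 ∧ b = 0 := by decide

lemma aux_int (t s : ℚ_[3]) (ht : ‖t‖ ≤ 1) (hs : ‖s‖ ≤ 1) (h1 : ‖t‖ = 1 ∨ ‖s‖ = 1) :
    ‖t ^ 2 - 5 * s ^ 2‖ = 1 := by
  set t' : ℤ_[3] := ⟨t, ht⟩ with ht'
  set s' : ℤ_[3] := ⟨s, hs⟩ with hs'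
  have h5 : ((5 : ℤ_[3]) : ℚ_[3]) = 5 := by norm_cast
  have hcoe : ((t' ^ 2 - 5 * s' ^ 2 : ℤ_[3]) : ℚ_[3]) = t ^ 2 - 5 * s ^ 2 := by
    push_cast [ht', hs', h5]
    exact congrArg₂ (fun a b => a - 5 * b) (PadicInt.coe_pow (⟨t, ht⟩ : ℤ_[3]) 2)
      (PadicInt.coe_pow (⟨s, hs⟩ : ℤ_[3]) 2)
  rw [← hcoe, ← PadicInt.norm_def]
  apply aux_unit_norm
  intro hres
  simp only [map_sub, map_pow, _root_.map_mul, map_ofNat] at hres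
  obtain ⟨hz1, hz2⟩ := aux_zmod3 _ _ hres
  rcases h1 with h1 | h1
  · have := aux_small t' hz1
    rw [PadicInt.norm_def] at this
    simp only [ht'] at this
    exact absurd h1 (ne_of_lt this)
  · have := aux_small s' hz2
    rw [PadicInt.norm_def] at this
    simp only [hs'] at this
    exact absurd h1 (ne_of_lt this)

lemma aux_even (x y : ℚ_[3]) (h : x ≠ 0 ∨ y ≠ 0) :
    ∃ k : ℤ, ‖x ^ 2 - 5 * y ^ 2‖ = (3 : ℝ) ^ (2 * k) := by
  rcases le_total ‖y‖ ‖x‖ with hle | hle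
  · have hx : x ≠ 0 := by
      rcases h with h | h
      · exact h
      · intro h0
        apply h
        rw [h0, norm_zero] at hle
        exact norm_eq_zero.mp (le_antisymm hle (norm_nonneg y))
    refine ⟨-x.valuation, ?_⟩
    have hfac : x ^ 2 - 5 * y ^ 2 = x ^ 2 * ((1 : ℚ_[3]) ^ 2 - 5 * (y / x) ^ 2) := by
      field_simp
    have h1 : ‖x ^ 2 * ((1 : ℚ_[3]) ^ 2 - 5 * (y / x) ^ 2)‖ = ‖x‖ ^ 2 * 1 := by
      rw [norm_mul, norm_pow]
      congr 1
      apply aux_int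
      · simp
      · rw [norm_div]
        exact div_le_one_of_le₀ hle (norm_nonneg x)
      · left; simp
    rw [hfac, h1, mul_one, Padic.norm_eq_zpow_neg_valuation hx,
      show ((3 : ℕ) : ℝ) = 3 by norm_num,
      ← zpow_natCast ((3 : ℝ) ^ (-x.valuation)) 2, ← _root_.zpow_mul]
    congr 1
    ring
  · have hy : y ≠ 0 := by
      rcases h with h | h
      · intro h0
        apply h
        rw [h0, norm_zero] at hle
        exact norm_eq_zero.mp (le_antisymm hle (norm_nonneg x))
      · exact h
    refine ⟨-y.valuation, ?_⟩
    have hfac : x ^ 2 - 5 * y ^ 2 = y ^ 2 * ((x / y) ^ 2 - 5 * (1 : ℚ_[3]) ^ 2) := by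
      field_simp
    have h1 : ‖y ^ 2 * ((x / y) ^ 2 - 5 * (1 : ℚ_[3]) ^ 2)‖ = ‖y‖ ^ 2 * 1 := by
      rw [norm_mul, norm_pow]
      congr 1
      apply aux_int
      · rw [norm_div]
        exact div_le_one_of_le₀ hle (norm_nonneg y)
      · simp
      · right; simp
    rw [hfac, h1, mul_one, Padic.norm_eq_zpow_neg_valuation hy,
      show ((3 : ℕ) : ℝ) = 3 by norm_num,
      ← zpow_natCast ((3 : ℝ) ^ (-y.valuation)) 2, ← _root_.zpow_mul]
    congr 1
    ring

lemma aux_key (x y z w : ℚ_[3])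
    (h : x ^ 2 - 5 * y ^ 2 + 3 * (z ^ 2 - 5 * w ^ 2) = 0) :
    x = 0 ∧ y = 0 ∧ z = 0 ∧ w = 0 := by
  have hxy : x = 0 ∧ y = 0 := by
    by_contra hc
    have hor : x ≠ 0 ∨ y ≠ 0 := by tauto
    obtain ⟨k, hk⟩ := aux_even x y hor
    have hne : x ^ 2 - 5 * y ^ 2 ≠ 0 := by
      intro h0
      rw [h0, norm_zero] at hk
      have hpos : (0 : ℝ) < (3 : ℝ) ^ (2 * k) := by positivity
      linarith
    have hzw : z ≠ 0 ∨ w ≠ 0 := by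
      by_contra hzw
      push_neg at hzw
      apply hne
      rw [hzw.1, hzw.2] at h
      linear_combination h
    obtain ⟨l, hl⟩ := aux_even z w hzw
    have heq : x ^ 2 - 5 * y ^ 2 = -(3 * (z ^ 2 - 5 * w ^ 2)) := by
      linear_combination h
    have hnorm : ‖x ^ 2 - 5 * y ^ 2‖ = ‖(3 : ℚ_[3])‖ * ‖z ^ 2 - 5 * w ^ 2‖ := by
      rw [heq, norm_neg, norm_mul]
    have h3 : ‖(3 : ℚ_[3])‖ = (3 : ℝ) ^ (-1 : ℤ) := by
      have h3' : ‖(3 : ℚ_[3])‖ = ((3 : ℕ) : ℝ)⁻¹ := by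
        exact_mod_cast Padic.norm_p (p := 3)
      rw [h3']
      norm_num
    rw [hk, hl, h3, ← zpow_add₀ (by norm_num : (3 : ℝ) ≠ 0)] at hnorm
    have := zpow_right_injective₀ (by norm_num : (0 : ℝ) < 3) (by norm_num) hnorm
    omega
  have hzw : z = 0 ∧ w = 0 := by
    by_contra hc
    have hor : z ≠ 0 ∨ w ≠ 0 := by tauto
    obtain ⟨l, hl⟩ := aux_even z w hor
    have h0 : z ^ 2 - 5 * w ^ 2 = 0 := by
      rw [hxy.1, hxy.2] at h
      linear_combination h / 3
    rw [h0, norm_zero] at hl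
    have hpos : (0 : ℝ) < (3 : ℝ) ^ (2 * l) := by positivity
    linarith
  exact ⟨hxy.1, hxy.2, hzw.1, hzw.2⟩

theorem stmt_1 :
    let B : Matrix (Fin 4) (Fin 4) ℚ_[3] :=
      !![2, 1, -4, -2;
         1, 2, -2, -4;
         -4, -2, -2, -1;
         -2, -4, -1, -2]
    ∀ v : Fin 4 → ℚ_[3], v ⬝ᵥ (B *ᵥ v) = 0 → v = 0 := by
  intro B v h
  simp [B, dotProduct, Matrix.mulVec, Fin.sum_univ_four] at h
  have key : (2 * (v 0) + (v 1) - 4 * (v 2) - 2 * (v 3)) ^ 2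
        - 5 * (2 * (v 2) + (v 3)) ^ 2
      + 3 * (((v 1) - 2 * (v 3)) ^ 2 - 5 * (v 3) ^ 2) = 0 := by
    linear_combination 2 * h
  obtain ⟨h1, h2, h3, h4⟩ := aux_key _ _ _ _ key
  have hd0 : v 3 = 0 := h4
  have hc0 : v 2 = 0 := by linear_combination (h2 - hd0) / 2
  have hb0 : v 1 = 0 := by linear_combination h3 + 2 * hd0
  have ha0 : v 0 = 0 := by
    linear_combination (h1 + 4 * hc0 + 2 * hd0 - hb0) / 2
  funext i
  fin_cases i <;> simpa using ‹_›
end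

section
/- For all natural numbers q ≠ q', the polynomials P_q(X) = (q² + q + 1)·X² − (2q² + 2q + 3)·X + (q² + q + 1) and P_{q'}(X) = (q'² + q' + 1)·X² − (2q'² + 2q' + 3)·X + (q'² + q' + 1) are coprime elements of ℚ[X]. -/
open Polynomial

theorem stmt_4 (q q' : ℕ) (hqq' : q ≠ q') :
    IsCoprime
      (C ((q : ℚ) ^ 2 + q + 1) * X ^ 2 - C (2 * (q : ℚ) ^ 2 + 2 * q + 3) * X
        + C ((q : ℚ) ^ 2 + q + 1))
      (C ((q' : ℚ) ^ 2 + q' + 1) * X ^ 2 - C (2 * (q' : ℚ) ^ 2 + 2 * q' + 3) * X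
        + C ((q' : ℚ) ^ 2 + q' + 1)) := by
  set a : ℚ := (q : ℚ) ^ 2 + q + 1 with ha
  set a' : ℚ := (q' : ℚ) ^ 2 + q' + 1 with ha'
  have hne : a - a' ≠ 0 := by
    intro h
    apply hqq'
    have h2 : ((q : ℚ) - q') * ((q : ℚ) + q' + 1) = 0 := by
      rw [ha, ha'] at h; ring_nf at h ⊢; linarith
    have hpos : (q : ℚ) + q' + 1 ≠ 0 := by positivity
    have := mul_eq_zero.mp h2
    rcases this with h3 | h3
    · exact_mod_cast sub_eq_zero.mp h3
    · exact absurd h3 hpos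
  set e : ℚ := (a - a')⁻¹ with he
  have hE : C e * (C a - C a') = 1 := by
    rw [← C_sub, ← C_mul, inv_mul_cancel₀ hne, C_1]
  refine ⟨(X - 2) + C e * (1 - C a * (X - 2)), - (C e * (1 - C a * (X - 2))), ?_⟩
  have h1 : C (2 * (q : ℚ) ^ 2 + 2 * q + 3) = 2 * C a + 1 := by
    rw [ha]; push_cast [C_add, C_mul]; ring_nf; simp [map_ofNat]; ring
  have h2 : C (2 * (q' : ℚ) ^ 2 + 2 * q' + 3) = 2 * C a' + 1 := by
    rw [ha']; push_cast [C_add, C_mul]; ring_nf; simp [map_ofNat]; ring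
  rw [h1, h2]
  linear_combination ((1 - C a * (X - 2)) * (X - 1) ^ 2) * hE
end
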